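/- arXiv:2509.06744 — 2 statements merged into one kernel-verified Lean document; each statement's English description precedes it below -/
import Mathlib

section
/- Let B be s.p.d. with block structure 𝔅. Then β(J B Jᵀ) is minimized over full-rank block-diagonal matrices J if and only if there exists α > 0 such that (Jᵀ J)_{kk} = α (B_{kk})⁻¹ for every diagonal block index k. -/
open Matrix

/-- Scalar index type for a block structure with `n` blocks of sizes `m i`. -/
abbrev BIdx {n : ℕ} (m : Fin n → ℕ) := (i : Fin n) × Fin (m i)

/-- The `(i,j)` block of a block-structured matrix. -/
def blk {n : ℕ} {m : Fin n → ℕ} (A : Matrix (BIdx m) (BIdx m) ℝ) (i j : Fin n) :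
    Matrix (Fin (m i)) (Fin (m j)) ℝ :=
  fun a b => A ⟨i, a⟩ ⟨j, b⟩

/-- A matrix is block-diagonal with respect to the block structure. -/
def IsBlockDiag {n : ℕ} {m : Fin n → ℕ} (J : Matrix (BIdx m) (BIdx m) ℝ) : Prop :=
  ∀ p q : BIdx m, p.1 ≠ q.1 → J p q = 0

/-- The Kaporin number of a matrix. -/
noncomputable def kaporin {N : Type*} [Fintype N] [DecidableEq N] (B : Matrix N N ℝ) : ℝ :=
  B.trace / (Fintype.card N * B.det ^ ((Fintype.card N : ℝ)⁻¹))

/-! ### Auxiliary lemmas: AM-GM -/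

open Finset in
private lemma amgm_aux {ι : Type*} [Fintype ι] [Nonempty ι] (x : ι → ℝ) (hx : ∀ i, 0 < x i) :
    (Fintype.card ι : ℝ) * (∏ i, x i) ^ ((Fintype.card ι : ℝ)⁻¹) ≤ ∑ i, x i := by
  set N : ℝ := (Fintype.card ι : ℝ) with hN
  have hN0 : (0:ℝ) < N := by positivity
  have hprod : (0:ℝ) < ∏ i, x i := Finset.prod_pos fun i _ => hx i
  have hsum : (0:ℝ) < ∑ i, x i := Finset.sum_pos (fun i _ => hx i) univ_nonempty
  have hw : ∑ _i : ι, N⁻¹ = 1 := by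
    rw [Finset.sum_const, Finset.card_univ, nsmul_eq_mul, ← hN]; field_simp
  have jensen := (strictConcaveOn_log_Ioi.concaveOn).le_map_sum
    (t := univ) (w := fun _ : ι => N⁻¹) (p := x)
    (fun i _ => by positivity) hw (fun i _ => hx i)
  simp only [smul_eq_mul] at jensen
  have hlog : N⁻¹ * Real.log (∏ i, x i) ≤ Real.log (N⁻¹ * ∑ i, x i) := by
    rw [Real.log_prod (fun i _ => (hx i).ne'), Finset.mul_sum]
    calc ∑ i, N⁻¹ * Real.log (x i) ≤ Real.log (∑ i, N⁻¹ * x i) := jensen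
      _ = Real.log (N⁻¹ * ∑ i, x i) := by rw [Finset.mul_sum]
  have h2 := Real.exp_le_exp.2 hlog
  rw [Real.exp_log (by positivity)] at h2
  rw [Real.rpow_def_of_pos hprod, mul_comm (Real.log _)]
  calc N * Real.exp (N⁻¹ * Real.log (∏ i, x i))
      ≤ N * (N⁻¹ * ∑ i, x i) := mul_le_mul_of_nonneg_left h2 hN0.le
    _ = ∑ i, x i := by field_simp

open Finset in
private lemma amgm_eq_aux {ι : Type*} [Fintype ι] [Nonempty ι] (x : ι → ℝ) (hx : ∀ i, 0 < x i)
    (heq : ∑ i, x i ≤ (Fintype.card ι : ℝ) * (∏ i, x i) ^ ((Fintype.card ι : ℝ)⁻¹)) :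
    ∀ i j, x i = x j := by
  set N : ℝ := (Fintype.card ι : ℝ) with hN
  have hN0 : (0:ℝ) < N := by positivity
  have hprod : (0:ℝ) < ∏ i, x i := Finset.prod_pos fun i _ => hx i
  have hsum : (0:ℝ) < ∑ i, x i := Finset.sum_pos (fun i _ => hx i) univ_nonempty
  have hw : ∑ _i : ι, N⁻¹ = 1 := by
    rw [Finset.sum_const, Finset.card_univ, nsmul_eq_mul, ← hN]; field_simp
  have key := strictConcaveOn_log_Ioi.eq_of_map_sum_eq
    (t := univ) (w := fun _ : ι => N⁻¹) (p := x)
    (fun i _ => by positivity) hw (fun i _ => hx i) ?_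
  · intro i j; exact key (mem_univ i) (mem_univ j)
  · simp only [smul_eq_mul]
    have h2 : ∑ i, N⁻¹ * Real.log (x i) = N⁻¹ * Real.log (∏ i, x i) := by
      rw [Real.log_prod (fun i _ => (hx i).ne'), Finset.mul_sum]
    rw [h2, show ∑ i, N⁻¹ * x i = N⁻¹ * ∑ i, x i from (Finset.mul_sum _ _ _).symm]
    have hle : N⁻¹ * ∑ i, x i ≤ (∏ i, x i) ^ N⁻¹ := by
      rw [inv_mul_le_iff₀ hN0]; exact heq
    calc Real.log (N⁻¹ * ∑ i, x i) ≤ Real.log ((∏ i, x i) ^ N⁻¹) :=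
          Real.log_le_log (by positivity) hle
      _ = N⁻¹ * Real.log (∏ i, x i) := Real.log_rpow hprod _

/-! ### Auxiliary lemmas: spectral facts over `ℝ` -/

section Spectral

open Finset

variable {I : Type*} [Fintype I] [DecidableEq I]

private lemma trace_eq_sum_eigs {A : Matrix I I ℝ} (hA : A.IsHermitian) :
    A.trace = ∑ i, hA.eigenvalues i := by
  have hU : (star (hA.eigenvectorUnitary : Matrix I I ℝ)) * (hA.eigenvectorUnitary : Matrix I I ℝ)
      = 1 := Unitary.coe_star_mul_self hA.eigenvectorUnitary
  nth_rewrite 1 [hA.spectral_theorem, Unitary.conjStarAlgAut_apply]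
  rw [Matrix.trace_mul_cycle, hU, one_mul, trace_diagonal]
  simp [RCLike.ofReal]

private lemma eq_smul_one_of_eigs {A : Matrix I I ℝ} (hA : A.IsHermitian) {c : ℝ}
    (h : ∀ i, hA.eigenvalues i = c) : A = c • 1 := by
  have hU : (hA.eigenvectorUnitary : Matrix I I ℝ) * (star (hA.eigenvectorUnitary : Matrix I I ℝ))
      = 1 := Unitary.coe_mul_star_self hA.eigenvectorUnitary
  have hd : Matrix.diagonal (RCLike.ofReal ∘ hA.eigenvalues : I → ℝ) = c • 1 := by
    funext i j
    simp only [Matrix.diagonal, Function.comp_apply, h, Matrix.smul_apply, Matrix.one_apply,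
      Matrix.of_apply, RCLike.ofReal, smul_eq_mul]
    split <;> simp
  nth_rewrite 1 [hA.spectral_theorem, Unitary.conjStarAlgAut_apply]
  rw [hd, mul_smul_comm, smul_mul_assoc, mul_one, hU]

private lemma det_eq_prod_eigs {A : Matrix I I ℝ} (hA : A.IsHermitian) :
    A.det = ∏ i, hA.eigenvalues i := by
  simpa [RCLike.ofReal] using hA.det_eq_prod_eigenvalues

private lemma kaporin_smul_one [Nonempty I] {c : ℝ} (hc : 0 < c) :
    kaporin (c • (1 : Matrix I I ℝ)) = 1 := by
  have hN : (0:ℝ) < (Fintype.card I : ℝ) := by positivity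
  have hdet : (c • (1 : Matrix I I ℝ)).det = c ^ (Fintype.card I) := by
    rw [Matrix.det_smul, Matrix.det_one, mul_one]
  have hrd : ((c : ℝ) ^ (Fintype.card I)) ^ ((Fintype.card I : ℝ)⁻¹) = c := by
    rw [← Real.rpow_natCast c (Fintype.card I), ← Real.rpow_mul hc.le,
      mul_inv_cancel₀ hN.ne', Real.rpow_one]
  have htr : (c • (1 : Matrix I I ℝ)).trace = c * Fintype.card I := by
    rw [Matrix.trace_smul, Matrix.trace_one]; simp [mul_comm]
  rw [kaporin, htr, hdet, hrd]
  field_simp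

private lemma one_le_kaporin [Nonempty I] {M : Matrix I I ℝ} (hM : M.PosDef) :
    1 ≤ kaporin M := by
  have hN : (0:ℝ) < (Fintype.card I : ℝ) := by positivity
  have hd : (0:ℝ) < M.det ^ ((Fintype.card I : ℝ)⁻¹) := Real.rpow_pos_of_pos hM.det_pos _
  rw [kaporin, le_div_iff₀ (by positivity), one_mul]
  rw [trace_eq_sum_eigs hM.isHermitian, det_eq_prod_eigs hM.isHermitian]
  exact amgm_aux _ hM.eigenvalues_pos

private lemma kaporin_le_one_iff [Nonempty I] {M : Matrix I I ℝ} (hM : M.PosDef) :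
    kaporin M ≤ 1 ↔ ∃ c : ℝ, 0 < c ∧ M = c • 1 := by
  have hN : (0:ℝ) < (Fintype.card I : ℝ) := by positivity
  have hd : (0:ℝ) < M.det ^ ((Fintype.card I : ℝ)⁻¹) := Real.rpow_pos_of_pos hM.det_pos _
  constructor
  · intro h
    rw [kaporin, div_le_one (by positivity)] at h
    rw [trace_eq_sum_eigs hM.isHermitian, det_eq_prod_eigs hM.isHermitian] at h
    have hconst := amgm_eq_aux _ hM.eigenvalues_pos (by simpa using h)
    set i₀ : I := Classical.arbitrary I
    exact ⟨hM.isHermitian.eigenvalues i₀, hM.eigenvalues_pos i₀,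
      eq_smul_one_of_eigs hM.isHermitian (fun i => hconst i i₀)⟩
  · rintro ⟨c, hc, rfl⟩
    rw [kaporin_smul_one hc]

private lemma posDef_conj {B : Matrix I I ℝ} (hB : B.PosDef) {J : Matrix I I ℝ}
    (hJ : IsUnit J) : (J * B * Jᵀ).PosDef := by
  have hBs : Bᵀ = B := by
    have := hB.isHermitian
    rwa [Matrix.IsHermitian, conjTranspose_eq_transpose_of_trivial] at this
  refine Matrix.PosDef.of_dotProduct_mulVec_pos ?_ ?_
  · rw [Matrix.IsHermitian, conjTranspose_eq_transpose_of_trivial,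
      Matrix.transpose_mul, Matrix.transpose_mul, Matrix.transpose_transpose, hBs, mul_assoc]
  · intro x hx
    have hy : Jᵀ *ᵥ x ≠ 0 := by
      intro h0
      apply hx
      have : (Jᵀ)⁻¹ *ᵥ (Jᵀ *ᵥ x) = x := by
        rw [Matrix.mulVec_mulVec, Matrix.nonsing_inv_mul _ (by
            rw [Matrix.det_transpose]; exact (Matrix.isUnit_iff_isUnit_det J).mp hJ),
          Matrix.one_mulVec]
      rw [← this, h0, Matrix.mulVec_zero]
    have key : dotProduct (star x) ((J * B * Jᵀ) *ᵥ x)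
        = dotProduct (star (Jᵀ *ᵥ x)) (B *ᵥ (Jᵀ *ᵥ x)) := by
      simp only [star_trivial]
      rw [← Matrix.mulVec_mulVec, ← Matrix.mulVec_mulVec, Matrix.dotProduct_mulVec x J,
        Matrix.mulVec_transpose]
    rw [key]
    exact hB.dotProduct_mulVec_pos hy

end Spectral

/-! ### Auxiliary lemmas: block structure -/

section Blocks

open Finset

variable {n : ℕ} {m : Fin n → ℕ}

private lemma sum_block (f : BIdx m → ℝ) (k : Fin n) (h : ∀ p : BIdx m, p.1 ≠ k → f p = 0) :
    ∑ p, f p = ∑ a : Fin (m k), f ⟨k, a⟩ := by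
  rw [← Finset.univ_sigma_univ, Finset.sum_sigma]
  rw [Finset.sum_eq_single k]
  · intro j _ hj
    exact Finset.sum_eq_zero fun a _ => h ⟨j, a⟩ hj
  · intro hk; exact absurd (Finset.mem_univ k) hk

private lemma isBlockDiag_blockDiagonal' (f : ∀ k : Fin n, Matrix (Fin (m k)) (Fin (m k)) ℝ) :
    IsBlockDiag (blockDiagonal' f) := by
  rintro ⟨i, a⟩ ⟨j, b⟩ h
  exact blockDiagonal'_apply_ne f a b h

private lemma eq_blockDiagonal' {J : Matrix (BIdx m) (BIdx m) ℝ} (hJ : IsBlockDiag J) :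
    J = blockDiagonal' (fun k => blk J k k) := by
  funext p q
  obtain ⟨i, a⟩ := p; obtain ⟨j, b⟩ := q
  rcases eq_or_ne i j with h | h
  · subst h
    rw [blockDiagonal'_apply_eq]
    rfl
  · rw [blockDiagonal'_apply_ne _ _ _ h]
    exact hJ _ _ h

private lemma blk_blockDiagonal' (f : ∀ k : Fin n, Matrix (Fin (m k)) (Fin (m k)) ℝ) (k : Fin n) :
    blk (blockDiagonal' f) k k = f k := by
  funext a b
  exact blockDiagonal'_apply_eq f k a b

private lemma IsBlockDiag.transpose' {J : Matrix (BIdx m) (BIdx m) ℝ} (hJ : IsBlockDiag J) :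
    IsBlockDiag Jᵀ := fun p q h => hJ q p h.symm

private lemma IsBlockDiag.mul' {J K : Matrix (BIdx m) (BIdx m) ℝ} (hJ : IsBlockDiag J)
    (hK : IsBlockDiag K) : IsBlockDiag (J * K) := by
  intro p q h
  rw [mul_apply]
  apply Finset.sum_eq_zero
  intro r _
  rcases eq_or_ne p.1 r.1 with hr | hr
  · rw [hK r q (hr ▸ h), mul_zero]
  · rw [hJ p r hr, zero_mul]

private lemma blk_posDef {B : Matrix (BIdx m) (BIdx m) ℝ} (hB : B.PosDef) (k : Fin n) :
    (blk B k k).PosDef := by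
  refine Matrix.PosDef.of_dotProduct_mulVec_pos ?_ ?_
  · have := hB.isHermitian
    rw [Matrix.IsHermitian, conjTranspose_eq_transpose_of_trivial] at this ⊢
    funext a b
    simpa [blk, Matrix.transpose] using congrFun (congrFun this ⟨k, a⟩) ⟨k, b⟩
  · intro x hx
    set y : BIdx m → ℝ := fun p => if h : p.1 = k then x (Fin.cast (by rw [h]) p.2) else 0 with hy
    have hyk : ∀ a : Fin (m k), y ⟨k, a⟩ = x a := by intro a; simp [hy]
    have hy0 : y ≠ 0 := by
      intro h0
      apply hx
      funext a
      have := congrFun h0 ⟨k, a⟩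
      rwa [hyk] at this
    have hpos := hB.dotProduct_mulVec_pos hy0
    have hsupp : ∀ p : BIdx m, p.1 ≠ k → y p = 0 := by
      intro p hp; simp [hy, hp]
    have hre : dotProduct (star y) (B *ᵥ y) = dotProduct (star x) ((blk B k k) *ᵥ x) := by
      simp only [dotProduct, mulVec, star_trivial]
      rw [sum_block (fun p => y p * ∑ q, B p q * y q) k
        (fun p hp => by show y p * _ = 0; rw [hsupp p hp, zero_mul])]
      congr 1
      funext a
      rw [hyk]
      congr 1
      rw [sum_block (fun q => B ⟨k, a⟩ q * y q) k
        (fun q hq => by show _ * y q = 0; rw [hsupp q hq, mul_zero])]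
      congr 1
      funext b
      rw [hyk]
      rfl
    rwa [hre] at hpos

private lemma trace_mul_blockDiag {X Y : Matrix (BIdx m) (BIdx m) ℝ}
    (hY : IsBlockDiag Y) :
    Matrix.trace (X * Y) = Matrix.trace (blockDiagonal' (fun k => blk X k k) * Y) := by
  simp only [Matrix.trace, Matrix.diag, Matrix.mul_apply]
  congr 1
  funext p
  congr 1
  funext q
  rcases eq_or_ne p.1 q.1 with h | h
  · obtain ⟨i, a⟩ := p; obtain ⟨j, b⟩ := q
    cases h
    rw [blockDiagonal'_apply_eq]
    rfl
  · rw [hY q p h.symm, mul_zero, mul_zero]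

end Blocks

open scoped MatrixOrder in
private lemma exists_sym_sqrt {k : Type*} [Fintype k] [DecidableEq k] {A : Matrix k k ℝ}
    (hA : A.PosSemidef) : ∃ C : Matrix k k ℝ, Cᵀ = C ∧ C * C = A := by
  refine ⟨CFC.sqrt A, ?_, CFC.sqrt_mul_sqrt_self A hA.nonneg⟩
  have := (CFC.sqrt_nonneg A).posSemidef.isHermitian
  rwa [Matrix.IsHermitian, conjTranspose_eq_transpose_of_trivial] at this

/-! ### Main theorem -/

set_option maxHeartbeats 1000000 in
/-- For `B` s.p.d. with block structure, `β(J B Jᵀ)` is minimized over full-rank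
block-diagonal matrices `J` iff there is `α > 0` with `(Jᵀ J)_{kk} = α (B_{kk})⁻¹`
for every diagonal block index `k`. -/
theorem kaporin_blockDiag_min_iff {n : ℕ} {m : Fin n → ℕ}
    (B : Matrix (BIdx m) (BIdx m) ℝ) (hB : B.PosDef)
    (J : Matrix (BIdx m) (BIdx m) ℝ) (hJ : IsUnit J) (hJd : IsBlockDiag J) :
    (∀ J' : Matrix (BIdx m) (BIdx m) ℝ, IsUnit J' → IsBlockDiag J' →
        kaporin (J * B * Jᵀ) ≤ kaporin (J' * B * J'ᵀ)) ↔
      ∃ α : ℝ, 0 < α ∧ ∀ k : Fin n, blk (Jᵀ * J) k k = α • (blk B k k)⁻¹ := by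
  classical
  rcases isEmpty_or_nonempty (BIdx m) with hE | hNE
  · -- degenerate case: empty index type
    have hk0 : ∀ (X : Matrix (BIdx m) (BIdx m) ℝ), kaporin X = 0 := by
      intro X
      rw [kaporin, Fintype.card_eq_zero]
      simp
    refine iff_of_true (fun J' _ _ => by rw [hk0, hk0]) ⟨1, one_pos, fun k => ?_⟩
    have : IsEmpty (Fin (m k)) := ⟨fun a => hE.false ⟨k, a⟩⟩
    funext a b
    exact (this.false a).elim
  -- main case
  set C : ∀ k : Fin n, Matrix (Fin (m k)) (Fin (m k)) ℝ :=
    fun k => Classical.choose (exists_sym_sqrt (blk_posDef hB k).posSemidef) with hC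
  have hCsym : ∀ k, (C k)ᵀ = C k := by
    intro k
    exact (Classical.choose_spec (exists_sym_sqrt (blk_posDef hB k).posSemidef)).1
  have hCC : ∀ k, C k * C k = blk B k k := fun k =>
    (Classical.choose_spec (exists_sym_sqrt (blk_posDef hB k).posSemidef)).2
  have hCdet : ∀ k, IsUnit (C k).det := by
    intro k
    have h2 : (C k).det * (C k).det = (blk B k k).det := by
      rw [← Matrix.det_mul, hCC]
    have : (blk B k k).det ≠ 0 := (blk_posDef hB k).det_pos.ne'
    refine isUnit_iff_ne_zero.mpr fun h0 => this ?_
    rw [← h2, h0, zero_mul]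
  set Cb : Matrix (BIdx m) (BIdx m) ℝ := blockDiagonal' C with hCb
  set Ci : Matrix (BIdx m) (BIdx m) ℝ := blockDiagonal' (fun k => (C k)⁻¹) with hCi
  have hCbCi : Cb * Ci = 1 := by
    rw [hCb, hCi, ← blockDiagonal'_mul]
    rw [show (fun k => C k * (C k)⁻¹) = fun k : Fin n => (1 : Matrix (Fin (m k)) (Fin (m k)) ℝ)
      from funext fun k => Matrix.mul_nonsing_inv _ (hCdet k)]
    exact blockDiagonal'_one
  have hCiCb : Ci * Cb = 1 := by
    rw [hCb, hCi, ← blockDiagonal'_mul]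
    rw [show (fun k => (C k)⁻¹ * C k) = fun k : Fin n => (1 : Matrix (Fin (m k)) (Fin (m k)) ℝ)
      from funext fun k => Matrix.nonsing_inv_mul _ (hCdet k)]
    exact blockDiagonal'_one
  have hCbU : IsUnit Cb := ⟨⟨Cb, Ci, hCbCi, hCiCb⟩, rfl⟩
  have hCiU : IsUnit Ci := ⟨⟨Ci, Cb, hCiCb, hCbCi⟩, rfl⟩
  have hCbT : Cbᵀ = Cb := by
    rw [hCb, blockDiagonal'_transpose]
    exact congrArg _ (funext fun k => hCsym k)
  have hCiT : Ciᵀ = Ci := by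
    rw [hCi, blockDiagonal'_transpose]
    refine congrArg _ (funext fun k => ?_)
    rw [Matrix.transpose_nonsing_inv, hCsym]
  have hCbCb : Cb * Cb = blockDiagonal' (fun k => blk B k k) := by
    rw [hCb, ← blockDiagonal'_mul]
    exact congrArg _ (funext fun k => hCC k)
  have hBd : (Cb * Cb).PosDef := by
    have := posDef_conj (Matrix.PosDef.one (n := BIdx m) (R := ℝ)) hCbU
    rwa [mul_one, hCbT] at this
  have hN : (0:ℝ) < (Fintype.card (BIdx m) : ℝ) := by
    have := Fintype.card_pos (α := BIdx m); positivity
  set r : ℝ := ((Cb * Cb).det / B.det) ^ ((Fintype.card (BIdx m) : ℝ)⁻¹) with hr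
  have hrpos : 0 < r := Real.rpow_pos_of_pos (div_pos hBd.det_pos hB.det_pos) _
  -- the key decomposition
  have hdecomp : ∀ J' : Matrix (BIdx m) (BIdx m) ℝ, IsUnit J' → IsBlockDiag J' →
      (Cb * (J'ᵀ * J') * Cb).PosDef ∧
        kaporin (J' * B * J'ᵀ) = r * kaporin (Cb * (J'ᵀ * J') * Cb) := by
    intro J' hJ' hJd'
    have hJ'T : IsUnit J'ᵀ := by
      rw [Matrix.isUnit_iff_isUnit_det, Matrix.det_transpose,
        ← Matrix.isUnit_iff_isUnit_det]
      exact hJ'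
    have hS : (J'ᵀ * J').PosDef := by
      have := posDef_conj (Matrix.PosDef.one (n := BIdx m) (R := ℝ)) hJ'T
      rwa [mul_one, Matrix.transpose_transpose] at this
    have hSd : IsBlockDiag (J'ᵀ * J') := hJd'.transpose'.mul' hJd'
    have hM : (Cb * (J'ᵀ * J') * Cb).PosDef := by
      have := posDef_conj hS hCbU
      rwa [hCbT] at this
    refine ⟨hM, ?_⟩
    -- trace identity
    have htr : (J' * B * J'ᵀ).trace = (Cb * (J'ᵀ * J') * Cb).trace := by
      rw [Matrix.trace_mul_cycle, Matrix.trace_mul_comm, trace_mul_blockDiag hSd, ← hCbCb,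
        mul_assoc Cb Cb, Matrix.trace_mul_comm Cb]
    -- determinant identity
    have hCbd0 : Cb.det ≠ 0 := by
      intro h0
      have := hBd.det_pos
      rw [Matrix.det_mul, h0, zero_mul] at this
      exact lt_irrefl _ this
    have hdet : (J' * B * J'ᵀ).det = (Cb * (J'ᵀ * J') * Cb).det * (B.det / (Cb * Cb).det) := by
      rw [Matrix.det_mul, Matrix.det_mul, Matrix.det_mul, Matrix.det_mul, Matrix.det_transpose,
        Matrix.det_mul]
      simp only [Matrix.det_transpose, Matrix.det_mul]
      field_simp
    -- put it together
    have hMd : (0:ℝ) < (Cb * (J'ᵀ * J') * Cb).det := hM.det_pos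
    have hq : (0:ℝ) < B.det / (Cb * Cb).det := div_pos hB.det_pos hBd.det_pos
    have hrq : r * (B.det / (Cb * Cb).det) ^ ((Fintype.card (BIdx m) : ℝ)⁻¹) = 1 := by
      rw [hr, ← Real.mul_rpow (div_pos hBd.det_pos hB.det_pos).le hq.le,
        div_mul_div_comm, mul_comm ((Cb * Cb).det) B.det,
        div_self (mul_pos hB.det_pos hBd.det_pos).ne', Real.one_rpow]
    have scalar : ∀ T a b rr : ℝ, 0 < a → 0 < b → rr * b = 1 →
        T / ((Fintype.card (BIdx m) : ℝ) * (a * b)) =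
          rr * (T / ((Fintype.card (BIdx m) : ℝ) * a)) := by
      intro T a b rr ha hb hrb
      have hrr : rr = b⁻¹ := eq_inv_of_mul_eq_one_left hrb
      rw [hrr]
      field_simp
    rw [kaporin, kaporin, htr, hdet]
    rw [Real.mul_rpow hMd.le hq.le]
    exact scalar _ _ _ _ (Real.rpow_pos_of_pos hMd _) (Real.rpow_pos_of_pos hq _) hrq
  obtain ⟨hMpd, hkeq⟩ := hdecomp J hJ hJd
  constructor
  · -- minimality implies the scaling relation
    intro hmin
    have hJ0d : IsBlockDiag Ci := isBlockDiag_blockDiagonal' _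
    obtain ⟨hM0pd, hk0eq⟩ := hdecomp Ci hCiU hJ0d
    have hM0 : Cb * (Ciᵀ * Ci) * Cb = 1 := by
      rw [hCiT, ← mul_assoc, mul_assoc Cb Ci Ci, ← mul_assoc Cb Ci, hCbCi, one_mul, hCiCb]
    have hmin0 := hmin Ci hCiU hJ0d
    rw [hkeq, hk0eq, hM0] at hmin0
    have h1 : kaporin (1 : Matrix (BIdx m) (BIdx m) ℝ) = 1 := by
      have := kaporin_smul_one (I := BIdx m) one_pos
      rwa [one_smul] at this
    rw [h1, mul_one] at hmin0
    have hle1 : kaporin (Cb * (Jᵀ * J) * Cb) ≤ 1 := by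
      nlinarith [hmin0, hrpos]
    obtain ⟨c, hc, hMc⟩ := (kaporin_le_one_iff hMpd).mp hle1
    refine ⟨c, hc, fun k => ?_⟩
    -- recover Jᵀ * J = c • (Ci * Ci)
    have hStoM : Jᵀ * J = Ci * (Cb * (Jᵀ * J) * Cb) * Ci := by
      rw [← mul_assoc, ← mul_assoc, hCiCb, one_mul, mul_assoc (Jᵀ * J), hCbCi, mul_one]
    rw [hMc] at hStoM
    have hS : Jᵀ * J = c • (Ci * Ci) := by
      rw [hStoM, mul_smul_comm, smul_mul_assoc, mul_one]
    have hCiCi : Ci * Ci = blockDiagonal' (fun k => (blk B k k)⁻¹) := by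
      rw [hCi, ← blockDiagonal'_mul]
      refine congrArg _ (funext fun k => ?_)
      rw [← Matrix.mul_inv_rev, hCC]
    rw [hS, hCiCi]
    funext a b
    show c * (blockDiagonal' (fun k => (blk B k k)⁻¹)) ⟨k, a⟩ ⟨k, b⟩ = _
    rw [blockDiagonal'_apply_eq]
    rfl
  · -- the scaling relation implies minimality
    rintro ⟨α, hα, hblk⟩
    have hSd : IsBlockDiag (Jᵀ * J) := hJd.transpose'.mul' hJd
    have hCiCi : Ci * Ci = blockDiagonal' (fun k => (blk B k k)⁻¹) := by
      rw [hCi, ← blockDiagonal'_mul]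
      refine congrArg _ (funext fun k => ?_)
      rw [← Matrix.mul_inv_rev, hCC]
    have hS : Jᵀ * J = α • (Ci * Ci) := by
      rw [eq_blockDiagonal' hSd, hCiCi, ← blockDiagonal'_smul]
      refine congrArg _ (funext fun k => ?_)
      rw [Pi.smul_apply, hblk k]
    have hM1 : Cb * (Jᵀ * J) * Cb = α • 1 := by
      rw [hS, mul_smul_comm, smul_mul_assoc]
      congr 1
      rw [← mul_assoc, mul_assoc Cb Ci Ci, ← mul_assoc Cb Ci, hCbCi, one_mul, hCiCb]
    intro J' hJ' hJd'
    obtain ⟨hM'pd, hk'eq⟩ := hdecomp J' hJ' hJd'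
    rw [hkeq, hk'eq, hM1, kaporin_smul_one hα, mul_one]
    calc r = r * 1 := (mul_one r).symm
      _ ≤ r * kaporin (Cb * (J'ᵀ * J') * Cb) := by
          exact mul_le_mul_of_nonneg_left (one_le_kaporin hM'pd) hrpos.le
end

section
/- With A, 𝒫, F, S as in the block-FSAI construction and G := S^{-1/2} F, the block-diagonal part of the preconditioned matrix G A Gᵀ is the identity matrix. -/
open Matrix

/-- The block-diagonal part `diag_𝔅(A)` of a block-structured matrix. -/
def bdiag {n : ℕ} {m : Fin n → ℕ} (A : Matrix (BIdx m) (BIdx m) ℝ) :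
    Matrix (BIdx m) (BIdx m) ℝ :=
  fun p q => if p.1 = q.1 then A p q else 0

/-- The block submatrix `A[S, T]` with block-row indices in `S` and block-column indices in `T`. -/
def subM {n : ℕ} {m : Fin n → ℕ} (A : Matrix (BIdx m) (BIdx m) ℝ) (S T : Finset (Fin n)) :
    Matrix {p : BIdx m // p.1 ∈ S} {q : BIdx m // q.1 ∈ T} ℝ :=
  fun p q => A p.val q.val

/-- The block row submatrix `A[{i}, T]`. -/
def rowM {n : ℕ} {m : Fin n → ℕ} (A : Matrix (BIdx m) (BIdx m) ℝ) (i : Fin n)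
    (T : Finset (Fin n)) : Matrix (Fin (m i)) {q : BIdx m // q.1 ∈ T} ℝ :=
  fun a q => A ⟨i, a⟩ q.val

/-- The block column submatrix `A[S, {i}]`. -/
def colM {n : ℕ} {m : Fin n → ℕ} (A : Matrix (BIdx m) (BIdx m) ℝ) (S : Finset (Fin n))
    (i : Fin n) : Matrix {p : BIdx m // p.1 ∈ S} (Fin (m i)) ℝ :=
  fun p a => A p.val ⟨i, a⟩

/-- A block sparsity pattern, given by its rows `P i ⊆ {1,…,n}`, is lower triangular and
contains the diagonal. -/
def IsLowerPattern {n : ℕ} (P : Fin n → Finset (Fin n)) : Prop :=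
  (∀ i, i ∈ P i) ∧ ∀ i j, j ∈ P i → j ≤ i

/-- `F` is the block-FSAI matrix for `A` based on the pattern `P`: identity diagonal blocks,
zero blocks outside the pattern, and `F[{i}, 𝒫̃ᵢ] = -A[{i}, 𝒫̃ᵢ] A[𝒫̃ᵢ, 𝒫̃ᵢ]⁻¹`
where `𝒫̃ᵢ = Pᵢ \ {i}`. -/
def IsFSAI {n : ℕ} {m : Fin n → ℕ} (A F : Matrix (BIdx m) (BIdx m) ℝ)
    (P : Fin n → Finset (Fin n)) : Prop :=
  (∀ i, blk F i i = 1) ∧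
  (∀ p q : BIdx m, p.1 ≠ q.1 → q.1 ∉ P p.1 → F p q = 0) ∧
  (∀ i, rowM F i ((P i).erase i) =
    -(rowM A i ((P i).erase i)) * (subM A ((P i).erase i) ((P i).erase i))⁻¹)

/-- `S` is the block-diagonal FSAI Schur-complement matrix:
`S_{ii} = A_{ii} - A[{i}, 𝒫̃ᵢ] A[𝒫̃ᵢ, 𝒫̃ᵢ]⁻¹ A[𝒫̃ᵢ, {i}]`. -/
def IsFSAISchur {n : ℕ} {m : Fin n → ℕ} (A S : Matrix (BIdx m) (BIdx m) ℝ)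
    (P : Fin n → Finset (Fin n)) : Prop :=
  (∀ p q : BIdx m, p.1 ≠ q.1 → S p q = 0) ∧
  (∀ i, blk S i i =
    blk A i i - rowM A i ((P i).erase i) * (subM A ((P i).erase i) ((P i).erase i))⁻¹ *
      colM A ((P i).erase i) i)


open scoped ComplexOrder in
/-- The square root of a positive semidefinite matrix, as defined in Mathlib (December 2024). -/
noncomputable def Matrix.PosSemidef.sqrt {n 𝕜 : Type*} [Fintype n] [DecidableEq n] [RCLike 𝕜]
    {M : Matrix n n 𝕜} (hA : M.PosSemidef) : Matrix n n 𝕜 :=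
  hA.1.eigenvectorUnitary.1 * diagonal ((↑) ∘ (√·) ∘ hA.1.eigenvalues) *
    (star hA.1.eigenvectorUnitary : Matrix n n 𝕜)

section SqrtHelpers
open scoped MatrixOrder

lemma Matrix.PosSemidef.sqrt_eq_cfcsqrt {N : Type*} [Fintype N] [DecidableEq N]
    {M : Matrix N N ℝ} (hM : M.PosSemidef) : hM.sqrt = CFC.sqrt M := by
  rw [CFC.sqrt_eq_real_sqrt M hM.nonneg, cfcₙ_eq_cfc, hM.1.cfc_eq]
  rfl

lemma Matrix.PosSemidef.sqrt_mul_self {N : Type*} [Fintype N] [DecidableEq N]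
    {M : Matrix N N ℝ} (hM : M.PosSemidef) : hM.sqrt * hM.sqrt = M := by
  rw [hM.sqrt_eq_cfcsqrt]
  exact CFC.sqrt_mul_sqrt_self M hM.nonneg

lemma Matrix.PosSemidef.posSemidef_sqrt {N : Type*} [Fintype N] [DecidableEq N]
    {M : Matrix N N ℝ} (hM : M.PosSemidef) : hM.sqrt.PosSemidef := by
  rw [hM.sqrt_eq_cfcsqrt]
  exact (CFC.sqrt_nonneg M).posSemidef

lemma Matrix.PosSemidef.eq_sqrt_of_sq_eq {N : Type*} [Fintype N] [DecidableEq N]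
    {B : Matrix N N ℝ} (hB : B.PosSemidef) {M : Matrix N N ℝ} (hM : M.PosSemidef)
    (h : B ^ 2 = M) : B = hM.sqrt := by
  rw [hM.sqrt_eq_cfcsqrt]
  exact (CFC.sqrt_unique (by rw [← h, pow_two]) hB.nonneg).symm

end SqrtHelpers

section Helpers

open Finset

/-- A principal submatrix (along an injective map) of a positive definite matrix is
positive definite. -/
lemma posDef_submatrix_inj {N I : Type*} [Fintype N] [Fintype I] [DecidableEq N] [DecidableEq I]
    {M : Matrix N N ℝ} (hM : M.PosDef) {e : I → N} (he : Function.Injective e) :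
    (M.submatrix e e).PosDef := by
  classical
  refine posDef_iff_dotProduct_mulVec.mpr ⟨hM.1.submatrix e, fun x hx => ?_⟩
  set y : N → ℝ := fun p => ∑ a, if e a = p then x a else 0 with hy
  have hyx : ∀ a, y (e a) = x a := by
    intro a
    show (∑ b : I, if e b = e a then x b else 0) = x a
    rw [Finset.sum_eq_single a (fun b _ hb => if_neg (fun h => hb (he h)))
      (fun h => absurd (Finset.mem_univ a) h)]
    simp
  have hy0 : y ≠ 0 := by
    obtain ⟨a, ha⟩ := Function.ne_iff.mp hx
    exact fun h => ha (by simpa [hyx a] using congrFun h (e a))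
  have hMy : ∀ p, (M *ᵥ y) p = ∑ b, M p (e b) * x b := by
    intro p
    simp only [mulVec, dotProduct, hy, Finset.mul_sum, mul_ite, mul_zero]
    rw [Finset.sum_comm]
    refine Finset.sum_congr rfl fun b _ => ?_
    rw [Finset.sum_eq_single (e b) (fun q _ hq => if_neg (Ne.symm hq)) (by simp)]
    simp
  have key : star x ⬝ᵥ (M.submatrix e e *ᵥ x) = star y ⬝ᵥ (M *ᵥ y) := by
    have h1 : star y ⬝ᵥ (M *ᵥ y) = ∑ c, x c * (M *ᵥ y) (e c) := by
      simp only [star_trivial, dotProduct, hy, Finset.sum_mul, ite_mul, zero_mul]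
      rw [Finset.sum_comm]
      refine Finset.sum_congr rfl fun c _ => ?_
      rw [Finset.sum_eq_single (e c) (fun q _ hq => if_neg (Ne.symm hq)) (by simp)]
      simp
    rw [h1]
    simp only [star_trivial, dotProduct]
    refine Finset.sum_congr rfl fun c _ => ?_
    rw [hMy]
    simp [mulVec, dotProduct, submatrix_apply]
  rw [key]
  exact hM.dotProduct_mulVec_pos hy0

variable {n : ℕ} {m : Fin n → ℕ}

/-- A block diagonal matrix with positive semidefinite blocks is positive semidefinite. -/
lemma posSemidef_blockDiagonal' (B : ∀ i : Fin n, Matrix (Fin (m i)) (Fin (m i)) ℝ)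
    (hB : ∀ i, (B i).PosSemidef) : (blockDiagonal' B).PosSemidef := by
  refine posSemidef_iff_dotProduct_mulVec.mpr ⟨?_, ?_⟩
  · have h : (blockDiagonal' B)ᴴ = blockDiagonal' fun i => (B i)ᴴ :=
      blockDiagonal'_conjTranspose B
    have h2 : (fun i => (B i)ᴴ) = B := funext fun i => (hB i).1
    rw [IsHermitian, h, h2]
  · intro x
    have hv : ∀ (i : Fin n) (a : Fin (m i)),
        (blockDiagonal' B *ᵥ x) ⟨i, a⟩ = ∑ b, B i a b * x ⟨i, b⟩ := by
      intro i a
      simp only [mulVec, dotProduct]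
      rw [← Finset.univ_sigma_univ, Finset.sum_sigma]
      rw [Fintype.sum_eq_single i
        (fun j hj => Finset.sum_eq_zero fun b _ => by
          rw [blockDiagonal'_apply_ne _ _ _ (Ne.symm hj), zero_mul])]
      exact Finset.sum_congr rfl fun b _ => by rw [blockDiagonal'_apply_eq]
    have hsplit : star x ⬝ᵥ (blockDiagonal' B *ᵥ x) =
        ∑ i, star (fun a => x ⟨i, a⟩) ⬝ᵥ (B i *ᵥ fun b => x ⟨i, b⟩) := by
      simp only [star_trivial, dotProduct]
      rw [← Finset.univ_sigma_univ, Finset.sum_sigma]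
      refine Finset.sum_congr rfl fun i _ => Finset.sum_congr rfl fun a _ => ?_
      rw [hv]
      simp [mulVec, dotProduct]
    rw [hsplit]
    exact Finset.sum_nonneg fun i _ => (hB i).dotProduct_mulVec_nonneg _

/-- The "row picking" matrix of an injection. -/
def pick {α β : Type*} [Fintype β] [DecidableEq β] (e : α → β) : Matrix α β ℝ :=
  fun a p => if e a = p then 1 else 0

lemma pick_mul {α β κ : Type*} [Fintype β] [DecidableEq β] [Fintype κ]
    (e : α → β) (X : Matrix β κ ℝ) : pick e * X = Matrix.of fun a q => X (e a) q := by
  ext a q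
  simp [pick, Matrix.mul_apply, ite_mul]

lemma mul_pickT {α β κ : Type*} [Fintype β] [DecidableEq β] [Fintype κ]
    (e : α → β) (X : Matrix κ β ℝ) : X * (pick e)ᵀ = Matrix.of fun p a => X p (e a) := by
  ext p a
  simp [pick, Matrix.mul_apply, mul_ite, Matrix.transpose_apply]

lemma blk_blockDiagonal'_mul (C : ∀ i : Fin n, Matrix (Fin (m i)) (Fin (m i)) ℝ)
    (X : Matrix (BIdx m) (BIdx m) ℝ) (i j : Fin n) :
    blk ((blockDiagonal' C : Matrix (BIdx m) (BIdx m) ℝ) * X) i j = C i * blk X i j := by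
  ext a b
  simp only [blk, Matrix.mul_apply]
  rw [← Finset.univ_sigma_univ, Finset.sum_sigma]
  rw [Fintype.sum_eq_single i
    (fun k hk => Finset.sum_eq_zero fun c _ => by
      rw [blockDiagonal'_apply_ne _ _ _ (Ne.symm hk), zero_mul])]
  exact Finset.sum_congr rfl fun c _ => by rw [blockDiagonal'_apply_eq]

lemma mul_blockDiagonal'_blk (C : ∀ i : Fin n, Matrix (Fin (m i)) (Fin (m i)) ℝ)
    (X : Matrix (BIdx m) (BIdx m) ℝ) (i j : Fin n) :
    blk (X * (blockDiagonal' C : Matrix (BIdx m) (BIdx m) ℝ)) i j = blk X i j * C j := by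
  ext a b
  simp only [blk, Matrix.mul_apply]
  rw [← Finset.univ_sigma_univ, Finset.sum_sigma]
  rw [Fintype.sum_eq_single j
    (fun k hk => Finset.sum_eq_zero fun c _ => by
      rw [blockDiagonal'_apply_ne _ _ _ hk, mul_zero])]
  exact Finset.sum_congr rfl fun c _ => by rw [blockDiagonal'_apply_eq]

/-- The key computation: the diagonal blocks of `F A Fᵀ` agree with those of `S`. -/
lemma blk_FAFt (A F S : Matrix (BIdx m) (BIdx m) ℝ) (P : Fin n → Finset (Fin n))
    (hA : A.PosDef) (hF : IsFSAI A F P) (hS : IsFSAISchur A S P) (i : Fin n) :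
    blk (F * A * Fᵀ) i i = blk S i i := by
  classical
  have hSi := hS.2 i
  have hwF := hF.2.2 i
  set t : Finset (Fin n) := (P i).erase i with ht
  set M : Matrix {q : BIdx m // q.1 ∈ t} {q : BIdx m // q.1 ∈ t} ℝ := subM A t t with hM
  set rA := rowM A i t with hrA
  set cA := colM A t i with hcA
  set w := rowM F i t with hwdef
  -- symmetry of A
  have hAs : ∀ p q, A p q = A q p := by
    intro p q
    conv_lhs => rw [← hA.1]
    simp [conjTranspose_apply]
  have hMpd : M.PosDef := by
    have := posDef_submatrix_inj hA (Subtype.val_injective (p := fun q : BIdx m => q.1 ∈ t))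
    exact this
  have hMdet : IsUnit M.det := hMpd.det_pos.ne'.isUnit
  have hMsym : Mᵀ = M := by
    ext p q
    exact hAs q.val p.val
  have hMinvsym : (M⁻¹)ᵀ = M⁻¹ := by
    rw [Matrix.transpose_nonsing_inv, hMsym]
  have hrct : rAᵀ = cA := by
    ext s a
    exact hAs ⟨i, a⟩ s.val
  -- the picking matrices
  set ι : Matrix (Fin (m i)) (BIdx m) ℝ := pick (fun a : Fin (m i) => (⟨i, a⟩ : BIdx m)) with hι
  set π : Matrix {q : BIdx m // q.1 ∈ t} (BIdx m) ℝ :=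
    pick (fun s : {q : BIdx m // q.1 ∈ t} => s.val) with hπ
  -- the decomposition of row block i of F
  have hu : ι + w * π = fun a p => F ⟨i, a⟩ p := by
    funext a p
    obtain ⟨j, c⟩ := p
    by_cases hj : j = i
    · subst hj
      have h1 : ι a ⟨j, c⟩ = if a = c then 1 else 0 := by
        simp [hι, pick, Sigma.mk.inj_iff]
      have h2 : (w * π) a ⟨j, c⟩ = 0 := by
        rw [Matrix.mul_apply]
        refine Finset.sum_eq_zero fun s _ => ?_
        rw [hπ]
        have hst : (s.val).fst ∈ (P j).erase j := s.2
        have : s.val ≠ (⟨j, c⟩ : BIdx m) := by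
          intro h
          exact Finset.ne_of_mem_erase hst (congrArg Sigma.fst h)
        simp [pick, this]
      have h3 : F ⟨j, a⟩ ⟨j, c⟩ = if a = c then 1 else 0 := by
        have := congrFun (congrFun (hF.1 j) a) c
        rw [blk] at this
        rw [this, Matrix.one_apply]
      simp [Matrix.add_apply, h1, h2, h3]
    · by_cases hjt : (⟨j, c⟩ : BIdx m).1 ∈ t
      · have h1 : ι a ⟨j, c⟩ = 0 := by
          have : (⟨i, a⟩ : BIdx m) ≠ ⟨j, c⟩ := by
            intro h
            exact hj (congrArg Sigma.fst h).symm
          simp [hι, pick, this]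
        have h2 : (w * π) a ⟨j, c⟩ = w a ⟨⟨j, c⟩, hjt⟩ := by
          rw [Matrix.mul_apply]
          rw [Finset.sum_eq_single (⟨⟨j, c⟩, hjt⟩ : {q : BIdx m // q.1 ∈ t})
            (fun s _ hs => by
              rw [hπ]
              have : s.val ≠ (⟨j, c⟩ : BIdx m) := fun h => hs (Subtype.ext h)
              simp [pick, this])
            (fun h => absurd (Finset.mem_univ _) h)]
          rw [hπ]
          simp [pick]
        rw [Matrix.add_apply, h1, h2, zero_add, hwdef]
        rfl
      · have h1 : ι a ⟨j, c⟩ = 0 := by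
          have : (⟨i, a⟩ : BIdx m) ≠ ⟨j, c⟩ := by
            intro h
            exact hj (congrArg Sigma.fst h).symm
          simp [hι, pick, this]
        have h2 : (w * π) a ⟨j, c⟩ = 0 := by
          rw [Matrix.mul_apply]
          refine Finset.sum_eq_zero fun s _ => ?_
          rw [hπ]
          have : s.val ≠ (⟨j, c⟩ : BIdx m) := by
            intro h
            exact hjt (h ▸ s.2)
          simp [pick, this]
        have h3 : F ⟨i, a⟩ ⟨j, c⟩ = 0 := by
          refine hF.2.1 ⟨i, a⟩ ⟨j, c⟩ (fun h => hj h.symm) ?_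
          intro hmem
          exact hjt (by rw [ht]; exact Finset.mem_erase.mpr ⟨hj, hmem⟩)
        simp [Matrix.add_apply, h1, h2, h3]
  have hblk : blk (F * A * Fᵀ) i i = (ι + w * π) * A * (ι + w * π)ᵀ := by
    rw [hu]
    ext a b
    simp [blk, Matrix.mul_apply, Matrix.transpose_apply]
    rfl
  have h1 : ι * A * ιᵀ = blk A i i := by
    rw [hι, pick_mul, mul_pickT]
    rfl
  have h2 : ι * A * πᵀ = rA := by
    rw [hι, hπ, pick_mul, mul_pickT]
    rfl
  have h3 : π * A * ιᵀ = cA := by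
    rw [hι, hπ, pick_mul, mul_pickT]
    rfl
  have h4 : π * A * πᵀ = M := by
    rw [hπ, pick_mul, mul_pickT]
    rfl
  have expand : (ι + w * π) * A * (ι + w * π)ᵀ =
      ι * A * ιᵀ + (ι * A * πᵀ) * wᵀ + w * (π * A * ιᵀ) + w * (π * A * πᵀ) * wᵀ := by
    simp only [Matrix.transpose_add, Matrix.transpose_mul, Matrix.add_mul, Matrix.mul_add,
      Matrix.mul_assoc]
    abel
  rw [hblk, expand, h1, h2, h3, h4, hSi, hwF]
  simp only [Matrix.transpose_mul, Matrix.transpose_neg, hMinvsym, hrct, Matrix.neg_mul,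
    Matrix.mul_neg, Matrix.mul_assoc]
  rw [show M * (M⁻¹ * cA) = cA by rw [← Matrix.mul_assoc, Matrix.mul_nonsing_inv _ hMdet,
    Matrix.one_mul]]
  abel

end Helpers

/-- With `G := S^{-1/2} F`, the block-diagonal part of the preconditioned matrix
`G A Gᵀ` is the identity matrix. -/
theorem fsai_preconditioned_bdiag_eq_one {n : ℕ} {m : Fin n → ℕ}
    (A F S : Matrix (BIdx m) (BIdx m) ℝ) (P : Fin n → Finset (Fin n))
    (hA : A.PosDef) (hP : IsLowerPattern P) (hF : IsFSAI A F P) (hS : IsFSAISchur A S P)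
    (hSpd : S.PosDef) :
    bdiag ((hSpd.posSemidef.sqrt)⁻¹ * F * A * ((hSpd.posSemidef.sqrt)⁻¹ * F)ᵀ) = 1 := by
  classical
  have hinj : ∀ i : Fin n, Function.Injective (fun a : Fin (m i) => (⟨i, a⟩ : BIdx m)) := by
    intro i a b h
    simpa [Sigma.mk.inj_iff] using h
  have hDpd : ∀ i, (blk S i i).PosDef := fun i => posDef_submatrix_inj hSpd (hinj i)
  set R : ∀ i : Fin n, Matrix (Fin (m i)) (Fin (m i)) ℝ :=
    fun i => ((hDpd i).posSemidef).sqrt with hR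
  have hRsq : ∀ i, R i * R i = blk S i i := fun i => ((hDpd i).posSemidef).sqrt_mul_self
  have hRpsd : ∀ i, (R i).PosSemidef := fun i => ((hDpd i).posSemidef).posSemidef_sqrt
  have hSbd : S = blockDiagonal' (fun i => blk S i i) := by
    ext ⟨j, a⟩ ⟨k, b⟩
    by_cases h : j = k
    · subst h
      rw [blockDiagonal'_apply_eq]
      rfl
    · rw [blockDiagonal'_apply_ne _ _ _ h]
      exact hS.1 _ _ h
  have hT : hSpd.posSemidef.sqrt = blockDiagonal' R := by
    refine ((posSemidef_blockDiagonal' R hRpsd).eq_sqrt_of_sq_eq hSpd.posSemidef ?_).symm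
    rw [pow_two, ← blockDiagonal'_mul, hSbd,
      show (fun k => R k * R k) = (fun i => blk S i i) from funext fun k => hRsq k]
  have hRdet : ∀ i, IsUnit (R i).det := by
    intro i
    have h : IsUnit ((R i).det * (R i).det) := by
      rw [← Matrix.det_mul, hRsq i]
      exact (hDpd i).det_pos.ne'.isUnit
    exact (IsUnit.mul_iff.mp h).1
  have hTinv : (hSpd.posSemidef.sqrt)⁻¹ = blockDiagonal' (fun i => (R i)⁻¹) := by
    rw [hT]
    apply Matrix.inv_eq_right_inv
    rw [← blockDiagonal'_mul,
      show (fun k => R k * (R k)⁻¹) = fun k : Fin n => (1 : Matrix (Fin (m k)) (Fin (m k)) ℝ) from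
        funext fun k => Matrix.mul_nonsing_inv _ (hRdet k)]
    exact blockDiagonal'_one
  have hRsym : ∀ i, (R i)ᵀ = R i := by
    intro i
    have h := (hRpsd i).1
    ext a b
    rw [Matrix.transpose_apply]
    conv_rhs => rw [← h]
    simp [conjTranspose_apply]
  have hTinvT : (blockDiagonal' (fun i => (R i)⁻¹) :
      Matrix (BIdx m) (BIdx m) ℝ)ᵀ = blockDiagonal' (fun i => (R i)⁻¹) := by
    rw [blockDiagonal'_transpose,
      show (fun i => ((R i)⁻¹)ᵀ) = fun i => (R i)⁻¹ from
        funext fun i => by rw [Matrix.transpose_nonsing_inv, hRsym i]]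
  have hY : (hSpd.posSemidef.sqrt)⁻¹ * F * A * ((hSpd.posSemidef.sqrt)⁻¹ * F)ᵀ =
      blockDiagonal' (fun i => (R i)⁻¹) * (F * A * Fᵀ) * blockDiagonal' (fun i => (R i)⁻¹) := by
    rw [Matrix.transpose_mul, hTinv, hTinvT]
    simp only [Matrix.mul_assoc]
  have hblkY : ∀ i, blk (blockDiagonal' (fun i => (R i)⁻¹) * (F * A * Fᵀ) *
      blockDiagonal' (fun i => (R i)⁻¹)) i i = 1 := by
    intro i
    rw [mul_blockDiagonal'_blk, blk_blockDiagonal'_mul, blk_FAFt A F S P hA hF hS i, ← hRsq i]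
    rw [Matrix.mul_assoc ((R i)⁻¹) (R i * R i) ((R i)⁻¹), Matrix.mul_assoc (R i) (R i) ((R i)⁻¹),
      Matrix.mul_nonsing_inv _ (hRdet i), Matrix.mul_one, Matrix.nonsing_inv_mul _ (hRdet i)]
  rw [hY]
  ext p q
  obtain ⟨j, a⟩ := p
  obtain ⟨k, b⟩ := q
  by_cases h : j = k
  · subst h
    have hb := congrFun (congrFun (hblkY j) a) b
    rw [blk] at hb
    show (if j = j then _ else (0 : ℝ)) = _
    rw [if_pos rfl, hb]
    by_cases hab : a = b
    · subst hab
      simp [Matrix.one_apply]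
    · have : (⟨j, a⟩ : BIdx m) ≠ ⟨j, b⟩ := by
        simp [Sigma.mk.inj_iff, hab]
      simp [Matrix.one_apply, hab, this]
  · have hne : (⟨j, a⟩ : BIdx m) ≠ ⟨k, b⟩ := by
      intro hc
      exact h (congrArg Sigma.fst hc)
    show (if j = k then _ else (0 : ℝ)) = _
    rw [if_neg h, Matrix.one_apply_ne hne]
end
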